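/- In the case a₀ = λ: the function u(t,x) = exp(ψ(t)e^{2λt}) e^{−λx²/2} with ψ(t) = ln b₀ − (1/2)(1 − e^{−2λt}) satisfies ∂ₜu = ∂ₓₓu + λ u ln(u²) for t > 0 and u(0,x) = b₀ e^{−λx²/2}. -/

import Mathlib

theorem gaussian_solution_pde_critical (lam b₀ : ℝ) (hlam : 0 < lam) (hb₀ : 0 < b₀)
    (ψ : ℝ → ℝ)
    (hψ : ∀ t, ψ t = Real.log b₀ - (1 / 2) * (1 - Real.exp (-(2 * lam * t))))
    (u : ℝ → ℝ → ℝ)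
    (hu : ∀ t x, u t x = Real.exp (ψ t * Real.exp (2 * lam * t)) *
        Real.exp (-(lam * x ^ 2 / 2))) :
    (∀ t > (0:ℝ), ∀ x : ℝ,
      deriv (fun τ => u τ x) t =
        deriv (deriv (fun y => u t y)) x + lam * u t x * Real.log ((u t x) ^ 2)) ∧
    (∀ x : ℝ, u 0 x = b₀ * Real.exp (-(lam * x ^ 2 / 2))) := by
  have hψf : ψ = fun t => Real.log b₀ - (1 / 2) * (1 - Real.exp (-(2 * lam * t))) :=
    funext hψ
  subst hψf
  have huf : u = fun t x => Real.exp ((Real.log b₀ - (1 / 2) * (1 - Real.exp (-(2 * lam * t)))) * Real.exp (2 * lam * t)) *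
      Real.exp (-(lam * x ^ 2 / 2)) := funext fun t => funext fun x => hu t x
  subst huf
  constructor
  · intro t ht x
    beta_reduce
    set ψt : ℝ := Real.log b₀ - (1 / 2) * (1 - Real.exp (-(2 * lam * t))) with hψt
    set A : ℝ := ψt * Real.exp (2 * lam * t) with hA
    set B : ℝ := -(lam * x ^ 2 / 2) with hB
    -- time derivative
    have hE : HasDerivAt (fun τ : ℝ => Real.exp (2 * lam * τ))
        (2 * lam * Real.exp (2 * lam * t)) t := by
      have := ((hasDerivAt_id t).const_mul (2 * lam)).exp
      simpa [mul_comm] using this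
    have hEn : HasDerivAt (fun τ : ℝ => Real.exp (-(2 * lam * τ)))
        (-(2 * lam) * Real.exp (-(2 * lam * t))) t := by
      have := (((hasDerivAt_id t).const_mul (2 * lam)).neg).exp
      simpa [mul_comm] using this
    have hψd : HasDerivAt (fun τ : ℝ => Real.log b₀ - (1 / 2) * (1 - Real.exp (-(2 * lam * τ))))
        (-(lam * Real.exp (-(2 * lam * t)))) t := by
      have h := ((hEn.const_sub 1).const_mul (1 / 2)).const_sub (Real.log b₀)
      refine h.congr_deriv ?_
      ring
    have hAd : HasDerivAt (fun τ : ℝ => (Real.log b₀ - (1 / 2) * (1 - Real.exp (-(2 * lam * τ)))) * Real.exp (2 * lam * τ))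
        (-(lam * Real.exp (-(2 * lam * t))) * Real.exp (2 * lam * t) + ψt * (2 * lam * Real.exp (2 * lam * t))) t :=
      hψd.mul hE
    have hT : HasDerivAt (fun τ : ℝ => Real.exp ((Real.log b₀ - (1 / 2) * (1 - Real.exp (-(2 * lam * τ)))) * Real.exp (2 * lam * τ)) * Real.exp (-(lam * x ^ 2 / 2)))
        (Real.exp A * (-(lam * Real.exp (-(2 * lam * t))) * Real.exp (2 * lam * t) + ψt * (2 * lam * Real.exp (2 * lam * t))) * Real.exp B) t :=
      hAd.exp.mul_const _
    -- spatial derivatives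
    have hsp : ∀ y : ℝ, HasDerivAt (fun y : ℝ => Real.exp A * Real.exp (-(lam * y ^ 2 / 2)))
        (Real.exp A * (Real.exp (-(lam * y ^ 2 / 2)) * (-(lam * y)))) y := by
      intro y
      have h1 : HasDerivAt (fun y : ℝ => -(lam * y ^ 2 / 2)) (-(lam * y)) y := by
        have := (((hasDerivAt_pow 2 y).const_mul lam).div_const 2).neg
        refine this.congr_deriv ?_
        ring
      exact h1.exp.const_mul _
    have hD1 : deriv (fun y : ℝ => Real.exp A * Real.exp (-(lam * y ^ 2 / 2)))
        = fun y : ℝ => Real.exp A * Real.exp (-(lam * y ^ 2 / 2)) * (-(lam * y)) := by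
      funext y
      rw [(hsp y).deriv]; ring
    have hlin : HasDerivAt (fun y : ℝ => -(lam * y)) (-lam) x := by
      have := ((hasDerivAt_id x).const_mul lam).neg
      exact this.congr_deriv (by ring)
    have hsp2 : HasDerivAt (fun y : ℝ => Real.exp A * Real.exp (-(lam * y ^ 2 / 2)) * (-(lam * y)))
        (Real.exp A * (Real.exp B * (-(lam * x))) * (-(lam * x)) +
          Real.exp A * Real.exp B * (-lam)) x := (hsp x).mul hlin
    have hlog : Real.log ((Real.exp A * Real.exp B) ^ 2) = A + B + (A + B) := by
      rw [← Real.exp_add, sq, ← Real.exp_add, Real.log_exp]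
    rw [hT.deriv, hD1, hsp2.deriv, hlog]
    have key : Real.exp (-(2 * lam * t)) * Real.exp (2 * lam * t) = 1 := by
      rw [← Real.exp_add]; simp
    linear_combination (-(lam * Real.exp A * Real.exp B)) * key
  · intro x
    simp [Real.exp_log hb₀]
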